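/- Let S and A be finite sets, let p̄ be a probability distribution on S × A with full support, and define the operator P^π on functions f : S × A → ℝ by (P^π f)(s,a) = Σ_{s'} p(s'|s,a) Σ_{a'} π(a'|s') f(s',a'). For a fixed discount 0 ≤ γ < 1, define Υ = inf { Ē[((I - γP^π)f(S,A))²] : f with Ē[f(S,A)²] ≥ 1 } and χ = sup { Ē[(E_{(S',A') ∼ d^π(·,·|S,A)}[f(S',A')])²] : f with Ē[f(S,A)²] ≤ 1 }, where Ē denotes expectation over (S,A) ∼ p̄ and d^π(s',a'|s,a) = (1-γ) Σ_{t=0}^∞ γ^t p_t^π(s',a'|S_0=s, A_0=a) is the conditional discounted visitation distribution. Then Υ is bounded below by a positive constant if and only if χ < ∞, and in that case Υ = (1-γ)²/χ. -/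

import Mathlib

set_option linter.unusedSectionVars false
namespace Stmt5Aux

variable {S A : Type*} [Fintype S] [Fintype A] [DecidableEq S] [DecidableEq A]

def Qop (p : S → A → S → ℝ) (π : S → A → ℝ) (f : S × A → ℝ) : S × A → ℝ :=
  fun x => ∑ s' : S, p x.1 x.2 s' * ∑ a' : A, π s' a' * f (s', a')

def Nw (pbar : S × A → ℝ) (f : S × A → ℝ) : ℝ := ∑ x : S × A, pbar x * f x ^ 2

variable (p : S → A → S → ℝ) (hp0 : ∀ s a s', 0 ≤ p s a s')
    (hp1 : ∀ s a, ∑ s' : S, p s a s' = 1)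
    (π : S → A → ℝ) (hπ0 : ∀ s a, 0 ≤ π s a) (hπ1 : ∀ s : S, ∑ a : A, π s a = 1)
    (γ : ℝ) (hγ0 : 0 ≤ γ) (hγ1 : γ < 1)
    (ptc : ℕ → S × A → S × A → ℝ)
    (hptc0 : ∀ x y : S × A, ptc 0 x y = if y = x then 1 else 0)
    (hptcS : ∀ (t : ℕ) (x : S × A) (s' : S) (a' : A),
      ptc (t + 1) x (s', a') =
        π s' a' * ∑ s'' : S, ∑ a'' : A, p s'' a'' s' * ptc t x (s'', a''))

include hπ0 hp0 hptc0 hptcS in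
theorem ptc_nonneg : ∀ (t : ℕ) (x y : S × A), 0 ≤ ptc t x y := by
  intro t
  induction t with
  | zero => intro x y; rw [hptc0]; positivity
  | succ t ih =>
      rintro x ⟨s', a'⟩
      rw [hptcS]
      apply mul_nonneg (hπ0 _ _)
      apply Finset.sum_nonneg; intro s'' _
      apply Finset.sum_nonneg; intro a'' _
      exact mul_nonneg (hp0 _ _ _) (ih _ _)

include hp1 hπ1 hptc0 hptcS in
theorem ptc_sum : ∀ (t : ℕ) (x : S × A), ∑ y : S × A, ptc t x y = 1 := by
  intro t
  induction t with
  | zero =>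
      intro x
      simp only [hptc0]
      rw [Finset.sum_ite_eq' Finset.univ x (fun _ => (1:ℝ))]
      simp
  | succ t ih =>
      intro x
      rw [Fintype.sum_prod_type]
      simp only [hptcS]
      have : ∀ s' : S, ∑ a' : A, π s' a' * ∑ s'' : S, ∑ a'' : A, p s'' a'' s' * ptc t x (s'', a'')
          = ∑ s'' : S, ∑ a'' : A, p s'' a'' s' * ptc t x (s'', a'') := by
        intro s'
        rw [← Finset.sum_mul, hπ1, one_mul]
      rw [Finset.sum_congr rfl fun s' _ => this s']
      rw [Finset.sum_comm]
      have : ∀ s'' : S, ∑ s' : S, ∑ a'' : A, p s'' a'' s' * ptc t x (s'', a'')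
          = ∑ a'' : A, ptc t x (s'', a'') := by
        intro s''
        rw [Finset.sum_comm]
        refine Finset.sum_congr rfl fun a'' _ => ?_
        rw [← Finset.sum_mul, hp1, one_mul]
      rw [Finset.sum_congr rfl fun s'' _ => this s'', ← Fintype.sum_prod_type]
      exact ih x

include hptc0 hptcS in
theorem ptc_apply :
    ∀ (t : ℕ) (f : S × A → ℝ) (x : S × A),
      ∑ y : S × A, ptc t x y * f y = (Qop p π)^[t] f x := by
  intro t
  induction t with
  | zero =>
      intro f x
      simp [hptc0, ite_mul]
  | succ t ih =>
      intro f x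
      rw [Function.iterate_succ_apply, ← ih (Qop p π f) x]
      have key : ∀ y : S × A,
          ptc (t+1) x y = π y.1 y.2 * ∑ z : S × A, p z.1 z.2 y.1 * ptc t x z := by
        rintro ⟨s', a'⟩
        rw [hptcS, Fintype.sum_prod_type]
      calc ∑ y : S × A, ptc (t+1) x y * f y
          = ∑ y : S × A, ∑ z : S × A,
              (π y.1 y.2 * (p z.1 z.2 y.1 * ptc t x z)) * f y := by
            simp only [key, Finset.mul_sum, Finset.sum_mul]
        _ = ∑ z : S × A, ptc t x z * Qop p π f z := by
            rw [Finset.sum_comm]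
            refine Finset.sum_congr rfl fun z _ => ?_
            simp only [Qop, Finset.mul_sum, Fintype.sum_prod_type]
            refine Finset.sum_congr rfl fun s' _ => ?_
            refine Finset.sum_congr rfl fun a' _ => ?_
            ring

include hπ0 hp0 hp1 hπ1 hptc0 hptcS in
theorem Qiter_bound (f : S × A → ℝ) (M : ℝ) (hM : ∀ y, |f y| ≤ M) (t : ℕ) (x : S × A) :
    |(Qop p π)^[t] f x| ≤ M := by
  rw [← ptc_apply p π ptc hptc0 hptcS t f x]
  calc |∑ y : S × A, ptc t x y * f y| ≤ ∑ y : S × A, |ptc t x y * f y| :=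
        Finset.abs_sum_le_sum_abs _ _
    _ ≤ ∑ y : S × A, ptc t x y * M := by
        refine Finset.sum_le_sum fun y _ => ?_
        rw [abs_mul, abs_of_nonneg (ptc_nonneg p hp0 π hπ0 ptc hptc0 hptcS t x y)]
        exact mul_le_mul_of_nonneg_left (hM y) (ptc_nonneg p hp0 π hπ0 ptc hptc0 hptcS t x y)
    _ = M := by rw [← Finset.sum_mul, ptc_sum p hp1 π hπ1 ptc hptc0 hptcS t x, one_mul]

include hγ0 hγ1 in
theorem summable_aux (g : ℕ → ℝ) (M : ℝ) (hg : ∀ t, |g t| ≤ M) :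
    Summable fun t => γ ^ t * g t := by
  apply Summable.of_norm_bounded (g := fun t => M * γ ^ t)
    ((summable_geometric_of_lt_one hγ0 hγ1).mul_left M)
  intro t
  rw [Real.norm_eq_abs, abs_mul, abs_of_nonneg (pow_nonneg hγ0 t), mul_comm]
  exact mul_le_mul_of_nonneg_right (hg t) (pow_nonneg hγ0 t)

noncomputable def Dt (f : S × A → ℝ) : S × A → ℝ := fun x => ∑' t : ℕ, γ ^ t * (Qop p π)^[t] f x

include hγ0 hγ1 hπ0 hp0 hp1 hπ1 hptc0 hptcS in
theorem summable_Dt (f : S × A → ℝ) (x : S × A) :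
    Summable fun t => γ ^ t * (Qop p π)^[t] f x := by
  refine summable_aux γ hγ0 hγ1 _ (∑ y : S × A, |f y|) fun t => ?_
  refine Qiter_bound p hp0 hp1 π hπ0 hπ1 ptc hptc0 hptcS f _ (fun y => ?_) t x
  exact Finset.single_le_sum (fun y _ => abs_nonneg (f y)) (Finset.mem_univ y)

theorem Qop_mul (c : ℝ) (g : S × A → ℝ) (x : S × A) :
    Qop p π (fun y => c * g y) x = c * Qop p π g x := by
  simp only [Qop, Finset.mul_sum]
  refine Finset.sum_congr rfl fun s' _ => ?_
  refine Finset.sum_congr rfl fun a' _ => ?_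
  ring

theorem Qop_tsum (a : ℕ → S × A → ℝ) (h : ∀ y, Summable fun t => a t y) (x : S × A) :
    Qop p π (fun y => ∑' t : ℕ, a t y) x = ∑' t : ℕ, Qop p π (a t) x := by
  simp only [Qop]
  calc ∑ s' : S, p x.1 x.2 s' * ∑ a' : A, π s' a' * ∑' t : ℕ, a t (s', a')
      = ∑ s' : S, ∑' t : ℕ, p x.1 x.2 s' * ∑ a' : A, π s' a' * a t (s', a') := by
        refine Finset.sum_congr rfl fun s' _ => ?_
        have h1 : ∀ a' : A, π s' a' * ∑' t : ℕ, a t (s', a')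
            = ∑' t : ℕ, π s' a' * a t (s', a') := fun a' => (tsum_mul_left).symm
        rw [Finset.sum_congr rfl fun a' _ => h1 a',
          ← Summable.tsum_finsetSum fun a' _ => (h (s', a')).mul_left _, ← tsum_mul_left]
    _ = ∑' t : ℕ, ∑ s' : S, p x.1 x.2 s' * ∑ a' : A, π s' a' * a t (s', a') := by
        refine (Summable.tsum_finsetSum fun s' _ => ?_).symm
        exact ((summable_sum (f := fun a' t => π s' a' * a t (s', a'))
          (fun a' _ => (h (s', a')).mul_left _)).mul_left _)

include hp0 hp1 hπ0 hπ1 hptc0 hptcS in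
theorem ptc_le_one (t : ℕ) (x y : S × A) : ptc t x y ≤ 1 := by
  have h := ptc_sum p hp1 π hπ1 ptc hptc0 hptcS t x
  calc ptc t x y ≤ ∑ y' : S × A, ptc t x y' :=
        Finset.single_le_sum
          (fun y' _ => ptc_nonneg p hp0 π hπ0 ptc hptc0 hptcS t x y') (Finset.mem_univ y)
    _ = 1 := h

include hγ0 hγ1 hπ0 hp0 hp1 hπ1 hptc0 hptcS in
theorem Dt_rec (f : S × A → ℝ) (x : S × A) :
    Dt p π γ f x = f x + γ * Dt p π γ (Qop p π f) x := by
  have hs := summable_Dt p hp0 hp1 π hπ0 hπ1 γ hγ0 hγ1 ptc hptc0 hptcS f x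
  unfold Dt
  rw [Summable.tsum_eq_zero_add hs]
  simp only [pow_zero, Function.iterate_zero, id_eq, one_mul]
  congr 1
  rw [← tsum_mul_left]
  congr 1; funext t
  rw [Function.iterate_succ_apply, pow_succ]
  ring

include hγ0 hγ1 hπ0 hp0 hp1 hπ1 hptc0 hptcS in
theorem Q_Dt (f : S × A → ℝ) (x : S × A) :
    Qop p π (Dt p π γ f) x = Dt p π γ (Qop p π f) x := by
  unfold Dt
  rw [Qop_tsum p π _ (fun y => summable_Dt p hp0 hp1 π hπ0 hπ1 γ hγ0 hγ1 ptc hptc0 hptcS f y) x]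
  congr 1; funext t
  rw [Qop_mul]
  congr 1
  have h : Qop p π ((Qop p π)^[t] f) = (Qop p π)^[t] (Qop p π f) :=
    (Function.iterate_succ_apply' (Qop p π) t f).symm.trans
      (Function.iterate_succ_apply (Qop p π) t f)
  rw [h]

variable (dcond : S × A → S × A → ℝ)
    (hdc : ∀ x y : S × A, dcond x y = (1 - γ) * ∑' t : ℕ, γ ^ t * ptc t x y)

include hγ0 hγ1 hπ0 hp0 hp1 hπ1 hptc0 hptcS hdc in
theorem Df_eq (f : S × A → ℝ) (x : S × A) :
    ∑ y : S × A, dcond x y * f y = (1 - γ) * Dt p π γ f x := by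
  have hsum : ∀ y : S × A, Summable fun t => γ ^ t * ptc t x y * f y := by
    intro y
    have := summable_aux γ hγ0 hγ1 (fun t => ptc t x y * f y) |f y| (fun t => ?_)
    · simpa [mul_assoc] using this
    · rw [abs_mul, abs_of_nonneg (ptc_nonneg p hp0 π hπ0 ptc hptc0 hptcS t x y)]
      calc ptc t x y * |f y| ≤ 1 * |f y| :=
            mul_le_mul_of_nonneg_right
              (ptc_le_one p hp0 hp1 π hπ0 hπ1 ptc hptc0 hptcS t x y) (abs_nonneg _)
        _ = |f y| := one_mul _
  calc ∑ y : S × A, dcond x y * f y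
      = ∑ y : S × A, (1 - γ) * ∑' t : ℕ, γ ^ t * ptc t x y * f y := by
        refine Finset.sum_congr rfl fun y _ => ?_
        rw [hdc x y, mul_assoc]
        congr 1
        exact (tsum_mul_right).symm
    _ = (1 - γ) * ∑' t : ℕ, ∑ y : S × A, γ ^ t * ptc t x y * f y := by
        rw [← Finset.mul_sum, ← Summable.tsum_finsetSum fun y _ => hsum y]
    _ = (1 - γ) * Dt p π γ f x := by
        unfold Dt
        congr 1
        refine tsum_congr fun t => ?_
        rw [← ptc_apply p π ptc hptc0 hptcS t f x, Finset.mul_sum]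
        exact Finset.sum_congr rfl fun y _ => by ring

include hγ0 hγ1 hπ0 hp0 hp1 hπ1 hptc0 hptcS hdc in
theorem TD (f : S × A → ℝ) (x : S × A) :
    (∑ y : S × A, dcond x y * f y)
      - γ * Qop p π (fun z => ∑ y : S × A, dcond z y * f y) x = (1 - γ) * f x := by
  have hfun : (fun z => ∑ y : S × A, dcond z y * f y) = fun z => (1 - γ) * Dt p π γ f z :=
    funext fun z => Df_eq p hp0 hp1 π hπ0 hπ1 γ hγ0 hγ1 ptc hptc0 hptcS dcond hdc f z
  rw [hfun, Df_eq p hp0 hp1 π hπ0 hπ1 γ hγ0 hγ1 ptc hptc0 hptcS dcond hdc f x, Qop_mul,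
    Q_Dt p hp0 hp1 π hπ0 hπ1 γ hγ0 hγ1 ptc hptc0 hptcS f x,
    Dt_rec p hp0 hp1 π hπ0 hπ1 γ hγ0 hγ1 ptc hptc0 hptcS f x]
  ring

include hp0 hp1 hπ0 hπ1 hγ0 hγ1 hptc0 hptcS in
theorem T_inj0 (f : S × A → ℝ) (hf : ∀ x, f x = γ * Qop p π f x) : ∀ x, f x = 0 := by
  intro x
  obtain ⟨x₀, -, hx₀⟩ := Finset.exists_max_image Finset.univ (fun y => |f y|)
    ⟨x, Finset.mem_univ x⟩
  have hQ : |Qop p π f x₀| ≤ |f x₀| := by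
    have := Qiter_bound p hp0 hp1 π hπ0 hπ1 ptc hptc0 hptcS f (|f x₀|)
      (fun y => hx₀ y (Finset.mem_univ y)) 1 x₀
    simpa using this
  have h1 : |f x₀| ≤ γ * |f x₀| := by
    calc |f x₀| = |γ * Qop p π f x₀| := by rw [← hf x₀]
      _ = γ * |Qop p π f x₀| := by rw [abs_mul, abs_of_nonneg hγ0]
      _ ≤ γ * |f x₀| := mul_le_mul_of_nonneg_left hQ hγ0
  have h0 : |f x₀| = 0 := by nlinarith [abs_nonneg (f x₀)]
  have := hx₀ x (Finset.mem_univ x)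
  rw [h0] at this
  exact abs_eq_zero.mp (le_antisymm this (abs_nonneg _))

theorem Qop_sub (f g : S × A → ℝ) (x : S × A) :
    Qop p π (fun y => f y - g y) x = Qop p π f x - Qop p π g x := by
  simp [Qop, mul_sub, Finset.sum_sub_distrib]

include hp0 hp1 hπ0 hπ1 hγ0 hγ1 hptc0 hptcS hdc in
theorem DT (f : S × A → ℝ) (x : S × A) :
    ∑ y : S × A, dcond x y * (f y - γ * Qop p π f y) = (1 - γ) * f x := by
  set h : S × A → ℝ := fun y => f y - γ * Qop p π f y with hh
  set g : S × A → ℝ := fun z => ∑ y : S × A, dcond z y * h y with hg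
  set d : S × A → ℝ := fun z => g z - (1 - γ) * f z with hd
  have hTd : ∀ z, d z = γ * Qop p π d z := by
    intro z
    have h1 := TD p hp0 hp1 π hπ0 hπ1 γ hγ0 hγ1 ptc hptc0 hptcS dcond hdc h z
    have h2 : Qop p π d z = Qop p π g z - (1 - γ) * Qop p π f z := by
      have : Qop p π d z = Qop p π g z - Qop p π (fun y => (1 - γ) * f y) z := by
        rw [← Qop_sub]
      rw [this, Qop_mul]
    have h3 : d z = g z - (1 - γ) * f z := rfl
    have h4 : g z - γ * Qop p π g z = (1 - γ) * h z := h1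
    have h5 : h z = f z - γ * Qop p π f z := rfl
    rw [h2, h3]
    rw [h5] at h4
    ring_nf
    ring_nf at h4
    linarith
  have := T_inj0 p hp0 hp1 π hπ0 hπ1 γ hγ0 hγ1 ptc hptc0 hptcS d hTd x
  have hdx : g x = (1 - γ) * f x := by
    have h3 : d x = g x - (1 - γ) * f x := rfl
    linarith [this, h3.symm.trans this]
  exact hdx

section Nw

variable (pbar : S × A → ℝ)

theorem Nw_nonneg (hpb0 : ∀ x : S × A, 0 < pbar x) (f : S × A → ℝ) : 0 ≤ Nw pbar f :=
  Finset.sum_nonneg fun x _ => mul_nonneg (hpb0 x).le (sq_nonneg _)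

theorem Nw_eq_zero (hpb0 : ∀ x : S × A, 0 < pbar x) (f : S × A → ℝ)
    (h : Nw pbar f = 0) : ∀ x, f x = 0 := by
  intro x
  have h2 := (Finset.sum_eq_zero_iff_of_nonneg
    (fun y (_ : y ∈ Finset.univ) => mul_nonneg (hpb0 y).le (sq_nonneg (f y)))).mp h x
    (Finset.mem_univ x)
  have h3 : f x ^ 2 = 0 := by
    rcases mul_eq_zero.mp h2 with h | h
    · exact absurd h (hpb0 x).ne'
    · exact h
  exact pow_eq_zero_iff (by norm_num) |>.mp h3

theorem Nw_pos (hpb0 : ∀ x : S × A, 0 < pbar x) (f : S × A → ℝ) (x : S × A)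
    (hx : f x ≠ 0) : 0 < Nw pbar f := by
  rcases lt_or_eq_of_le (Nw_nonneg pbar hpb0 f) with h | h
  · exact h
  · exact absurd (Nw_eq_zero pbar hpb0 f h.symm x) hx

theorem Nw_smul (c : ℝ) (f : S × A → ℝ) :
    Nw pbar (fun x => c * f x) = c ^ 2 * Nw pbar f := by
  unfold Nw
  rw [Finset.mul_sum]
  exact Finset.sum_congr rfl fun x _ => by ring

theorem cont_Nw : Continuous (Nw pbar) := by
  unfold Nw
  apply continuous_finset_sum
  intro x _
  exact continuous_const.mul ((continuous_apply x).pow 2)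

theorem cont_T (p : S → A → S → ℝ) (π : S → A → ℝ) (γ : ℝ) :
    Continuous fun f : S × A → ℝ => (fun x => f x - γ * Qop p π f x) := by
  apply continuous_pi
  intro x
  refine (continuous_apply x).sub (continuous_const.mul ?_)
  apply continuous_finset_sum
  intro s' _
  refine continuous_const.mul ?_
  apply continuous_finset_sum
  intro a' _
  exact continuous_const.mul (continuous_apply _)

theorem cont_D (dcond : S × A → S × A → ℝ) :
    Continuous fun f : S × A → ℝ => (fun x : S × A => ∑ y : S × A, dcond x y * f y) := by
  apply continuous_pi
  intro x
  apply continuous_finset_sum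
  intro y _
  exact continuous_const.mul (continuous_apply y)

theorem isCompact_sphere [Nonempty (S × A)] (hpb0 : ∀ x : S × A, 0 < pbar x) :
    IsCompact {f : S × A → ℝ | Nw pbar f = 1} := by
  have hclosed : IsClosed {f : S × A → ℝ | Nw pbar f = 1} :=
    isClosed_eq (cont_Nw pbar) continuous_const
  have hbdd : Bornology.IsBounded {f : S × A → ℝ | Nw pbar f = 1} := by
    rw [isBounded_iff_forall_norm_le]
    obtain ⟨x₀, -, hmin⟩ := Finset.exists_min_image Finset.univ pbar Finset.univ_nonempty
    refine ⟨Real.sqrt (1 / pbar x₀), fun f hf => ?_⟩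
    rw [pi_norm_le_iff_of_nonneg (Real.sqrt_nonneg _)]
    intro x
    have h1 : pbar x * f x ^ 2 ≤ 1 :=
      le_of_le_of_eq (Finset.single_le_sum
        (fun y (_ : y ∈ Finset.univ) => mul_nonneg (hpb0 y).le (sq_nonneg (f y)))
        (Finset.mem_univ x)) hf
    have h2 : f x ^ 2 ≤ 1 / pbar x₀ := by
      have hx := hmin x (Finset.mem_univ x)
      rw [le_div_iff₀ (hpb0 x₀)]
      calc f x ^ 2 * pbar x₀ ≤ f x ^ 2 * pbar x :=
            mul_le_mul_of_nonneg_left hx (sq_nonneg _)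
        _ ≤ 1 := by rw [mul_comm]; exact h1
    calc ‖f x‖ = Real.sqrt (f x ^ 2) := (Real.sqrt_sq_eq_abs _).symm
      _ ≤ Real.sqrt (1 / pbar x₀) := Real.sqrt_le_sqrt h2
  exact Metric.isCompact_of_isClosed_isBounded hclosed hbdd

theorem Dd_smul (dcond : S × A → S × A → ℝ) (c : ℝ) (f : S × A → ℝ) (x : S × A) :
    ∑ y : S × A, dcond x y * (c * f y) = c * ∑ y : S × A, dcond x y * f y := by
  rw [Finset.mul_sum]
  exact Finset.sum_congr rfl fun y _ => by ring

end Nw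

end Stmt5Aux

open Stmt5Aux


theorem stmt_5 {S A : Type*} [Fintype S] [Fintype A] [DecidableEq S] [DecidableEq A]
    (p : S → A → S → ℝ) (hp0 : ∀ s a s', 0 ≤ p s a s')
    (hp1 : ∀ s a, ∑ s' : S, p s a s' = 1)
    (π : S → A → ℝ) (hπ0 : ∀ s a, 0 ≤ π s a) (hπ1 : ∀ s : S, ∑ a : A, π s a = 1)
    (γ : ℝ) (hγ0 : 0 ≤ γ) (hγ1 : γ < 1)
    (pbar : S × A → ℝ) (hpb0 : ∀ x : S × A, 0 < pbar x) (hpb1 : ∑ x : S × A, pbar x = 1)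
    (ptc : ℕ → S × A → S × A → ℝ)
    (hptc0 : ∀ x y : S × A, ptc 0 x y = if y = x then 1 else 0)
    (hptcS : ∀ (t : ℕ) (x : S × A) (s' : S) (a' : A),
      ptc (t + 1) x (s', a') =
        π s' a' * ∑ s'' : S, ∑ a'' : A, p s'' a'' s' * ptc t x (s'', a''))
    (dcond : S × A → S × A → ℝ)
    (hdc : ∀ x y : S × A, dcond x y = (1 - γ) * ∑' t : ℕ, γ ^ t * ptc t x y) :
    ((∃ c > 0, ∀ u ∈ {u : ℝ | ∃ f : S × A → ℝ,
          1 ≤ ∑ x : S × A, pbar x * f x ^ 2 ∧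
          u = ∑ x : S × A, pbar x *
            (f x - γ * ∑ s' : S, p x.1 x.2 s' * ∑ a' : A, π s' a' * f (s', a')) ^ 2},
        c ≤ u) ↔
      BddAbove {u : ℝ | ∃ f : S × A → ℝ,
          (∑ x : S × A, pbar x * f x ^ 2) ≤ 1 ∧
          u = ∑ x : S × A, pbar x * (∑ y : S × A, dcond x y * f y) ^ 2}) ∧
    (BddAbove {u : ℝ | ∃ f : S × A → ℝ,
          (∑ x : S × A, pbar x * f x ^ 2) ≤ 1 ∧
          u = ∑ x : S × A, pbar x * (∑ y : S × A, dcond x y * f y) ^ 2} →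
      sInf {u : ℝ | ∃ f : S × A → ℝ,
          1 ≤ ∑ x : S × A, pbar x * f x ^ 2 ∧
          u = ∑ x : S × A, pbar x *
            (f x - γ * ∑ s' : S, p x.1 x.2 s' * ∑ a' : A, π s' a' * f (s', a')) ^ 2} =
        (1 - γ) ^ 2 / sSup {u : ℝ | ∃ f : S × A → ℝ,
          (∑ x : S × A, pbar x * f x ^ 2) ≤ 1 ∧
          u = ∑ x : S × A, pbar x * (∑ y : S × A, dcond x y * f y) ^ 2}) := by
    classical
  have hne : Nonempty (S × A) := by
    by_contra h
    rw [not_nonempty_iff] at h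
    rw [Finset.univ_eq_empty, Finset.sum_empty] at hpb1
    exact absurd hpb1 (by norm_num)
  set ΥS : Set ℝ := {u : ℝ | ∃ f : S × A → ℝ,
      1 ≤ ∑ x : S × A, pbar x * f x ^ 2 ∧
      u = ∑ x : S × A, pbar x *
        (f x - γ * ∑ s' : S, p x.1 x.2 s' * ∑ a' : A, π s' a' * f (s', a')) ^ 2} with hΥS
  set χS : Set ℝ := {u : ℝ | ∃ f : S × A → ℝ,
      (∑ x : S × A, pbar x * f x ^ 2) ≤ 1 ∧
      u = ∑ x : S × A, pbar x * (∑ y : S × A, dcond x y * f y) ^ 2} with hχS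
  have hΥmem : ∀ u : ℝ, u ∈ ΥS ↔ ∃ f : S × A → ℝ,
      1 ≤ Nw pbar f ∧ u = Nw pbar (fun x => f x - γ * Qop p π f x) := fun u => Iff.rfl
  have hχmem : ∀ u : ℝ, u ∈ χS ↔ ∃ f : S × A → ℝ,
      Nw pbar f ≤ 1 ∧ u = Nw pbar (fun x => ∑ y : S × A, dcond x y * f y) := fun u => Iff.rfl
  have hK : IsCompact {f : S × A → ℝ | Nw pbar f = 1} := isCompact_sphere pbar hpb0
  have hg1 : Nw pbar (fun _ => (1 : ℝ)) = 1 := by simpa [Nw] using hpb1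
  have hKne : Set.Nonempty {f : S × A → ℝ | Nw pbar f = 1} := ⟨fun _ => 1, hg1⟩
  obtain ⟨f₀, hf₀K, hmin⟩ := hK.exists_isMinOn hKne
    (((cont_Nw pbar).comp (cont_T p π γ)).continuousOn)
  obtain ⟨f₁, hf₁K, hmax⟩ := hK.exists_isMaxOn hKne
    (((cont_Nw pbar).comp (cont_D dcond)).continuousOn)
  simp only [Set.mem_setOf_eq] at hf₀K hf₁K
  set υ : ℝ := Nw pbar (fun x => f₀ x - γ * Qop p π f₀ x) with hυ
  set χv : ℝ := Nw pbar (fun x => ∑ y : S × A, dcond x y * f₁ y) with hχv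
  have hminle : ∀ g, Nw pbar g = 1 →
      υ ≤ Nw pbar (fun x => g x - γ * Qop p π g x) := fun g hg => hmin hg
  have hmaxle : ∀ g, Nw pbar g = 1 →
      Nw pbar (fun x => ∑ y : S × A, dcond x y * g y) ≤ χv := fun g hg => hmax hg
  have hTinj : ∀ f : S × A → ℝ, (∀ x, f x - γ * Qop p π f x = 0) → ∀ x, f x = 0 := by
    intro f hf
    exact T_inj0 p hp0 hp1 π hπ0 hπ1 γ hγ0 hγ1 ptc hptc0 hptcS f
      (fun x => by have := hf x; linarith)
  have hυpos : 0 < υ := by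
    rcases lt_or_eq_of_le (Nw_nonneg pbar hpb0 (fun x => f₀ x - γ * Qop p π f₀ x)) with h | h
    · exact h
    · exfalso
      have hz := Nw_eq_zero pbar hpb0 _ h.symm
      have hf0 := hTinj f₀ hz
      have h0 : Nw pbar f₀ = 0 := by
        unfold Nw
        apply Finset.sum_eq_zero
        intro x _
        rw [hf0 x]
        ring
      rw [hf₀K] at h0
      norm_num at h0
  have hχpos : 0 < χv := by
    have hDg1 : ∃ x, (∑ y : S × A, dcond x y * (1 : ℝ)) ≠ 0 := by
      by_contra h
      push_neg at h
      obtain ⟨x⟩ := hne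
      have hTD := TD p hp0 hp1 π hπ0 hπ1 γ hγ0 hγ1 ptc hptc0 hptcS dcond hdc
        (fun _ => (1 : ℝ)) x
      rw [h x] at hTD
      have hQ0 : Qop p π (fun z => ∑ y : S × A, dcond z y * (1 : ℝ)) x = 0 := by
        have hfun : (fun z => ∑ y : S × A, dcond z y * (1 : ℝ)) = fun _ => (0 : ℝ) := funext h
        rw [hfun]
        simp [Qop]
      rw [hQ0] at hTD
      simp at hTD
      linarith
    obtain ⟨x, hx⟩ := hDg1
    have h1 : 0 < Nw pbar (fun x => ∑ y : S × A, dcond x y * (1 : ℝ)) :=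
      Nw_pos pbar hpb0 _ x hx
    exact lt_of_lt_of_le h1 (hmaxle (fun _ => (1 : ℝ)) hg1)
  have hυmem : υ ∈ ΥS := (hΥmem υ).mpr ⟨f₀, by rw [hf₀K], rfl⟩
  have hχmemv : χv ∈ χS := (hχmem χv).mpr ⟨f₁, le_of_eq hf₁K, rfl⟩
  have hυlb : ∀ u ∈ ΥS, υ ≤ u := by
    intro u hu
    obtain ⟨f, hf1, rfl⟩ := (hΥmem u).mp hu
    have hNf : (0 : ℝ) < Nw pbar f := lt_of_lt_of_le one_pos hf1
    set c := Real.sqrt (Nw pbar f) with hc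
    have hc0 : 0 < c := Real.sqrt_pos.mpr hNf
    have hc2 : c ^ 2 = Nw pbar f := Real.sq_sqrt hNf.le
    have hc1 : 1 ≤ c := by nlinarith
    set g : S × A → ℝ := fun x => c⁻¹ * f x with hg
    have hNg : Nw pbar g = 1 := by
      rw [hg, Nw_smul pbar c⁻¹ f, inv_pow, hc2]
      field_simp
    have hfg : f = fun x => c * g x := by
      funext x
      rw [hg]
      field_simp
    have hTf : (fun x => f x - γ * Qop p π f x)
        = fun x => c * (g x - γ * Qop p π g x) := by
      funext x
      conv_lhs => rw [hfg]
      rw [Qop_mul]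
      ring
    rw [hTf, Nw_smul pbar c (fun x => g x - γ * Qop p π g x)]
    have hmg := hminle g hNg
    nlinarith [Nw_nonneg pbar hpb0 (fun x => g x - γ * Qop p π g x)]
  have hχub : ∀ u ∈ χS, u ≤ χv := by
    intro u hu
    obtain ⟨f, hf1, rfl⟩ := (hχmem u).mp hu
    rcases lt_or_eq_of_le (Nw_nonneg pbar hpb0 f) with hpos | h0
    · set c := Real.sqrt (Nw pbar f) with hc
      have hc0 : 0 < c := Real.sqrt_pos.mpr hpos
      have hc2 : c ^ 2 = Nw pbar f := Real.sq_sqrt hpos.le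
      have hcle : c ≤ 1 := by nlinarith
      set g : S × A → ℝ := fun x => c⁻¹ * f x with hg
      have hNg : Nw pbar g = 1 := by
        rw [hg, Nw_smul pbar c⁻¹ f, inv_pow, hc2]
        field_simp
      have hfg : f = fun x => c * g x := by
        funext x
        rw [hg]
        field_simp
      have hDf : (fun x => ∑ y : S × A, dcond x y * f y)
          = fun x => c * ∑ y : S × A, dcond x y * g y := by
        funext x
        conv_lhs => rw [hfg]
        exact Dd_smul dcond c g x
      rw [hDf, Nw_smul pbar c (fun x => ∑ y : S × A, dcond x y * g y)]
      have hmg := hmaxle g hNg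
      nlinarith [Nw_nonneg pbar hpb0 (fun x => ∑ y : S × A, dcond x y * g y)]
    · have hz := Nw_eq_zero pbar hpb0 f h0.symm
      have hDz : (fun x => ∑ y : S × A, dcond x y * f y) = fun _ => (0 : ℝ) := by
        funext x
        apply Finset.sum_eq_zero
        intro y _
        rw [hz y]
        ring
      rw [hDz]
      have : Nw pbar (fun _ => (0 : ℝ)) = 0 := by simp [Nw]
      rw [this]
      linarith
  have hdual1 : ∀ f : S × A → ℝ, Nw pbar f = 1 →
      (1 - γ) ^ 2 / χv ≤ Nw pbar (fun x => f x - γ * Qop p π f x) := by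
    intro f hNf
    set h : S × A → ℝ := fun x => f x - γ * Qop p π f x with hh
    have hDh : ∀ x, ∑ y : S × A, dcond x y * h y = (1 - γ) * f x := by
      intro x
      rw [hh]
      exact DT p hp0 hp1 π hπ0 hπ1 γ hγ0 hγ1 ptc hptc0 hptcS dcond hdc f x
    have hNh : 0 < Nw pbar h := by
      rcases lt_or_eq_of_le (Nw_nonneg pbar hpb0 h) with hlt | heq
      · exact hlt
      · exfalso
        have hz := Nw_eq_zero pbar hpb0 h heq.symm
        have hf0 := hTinj f (fun x => hz x)
        have h0 : Nw pbar f = 0 := by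
          unfold Nw
          apply Finset.sum_eq_zero
          intro x _
          rw [hf0 x]
          ring
        rw [hNf] at h0
        norm_num at h0
    set cH := Real.sqrt (Nw pbar h) with hcH
    have hc0 : 0 < cH := Real.sqrt_pos.mpr hNh
    have hc2 : cH ^ 2 = Nw pbar h := Real.sq_sqrt hNh.le
    have hg' : Nw pbar (fun x => cH⁻¹ * h x) = 1 := by
      rw [Nw_smul pbar cH⁻¹ h, inv_pow, hc2]
      field_simp
    have key : Nw pbar (fun x => ∑ y : S × A, dcond x y * (cH⁻¹ * h y))
        = (1 - γ) ^ 2 / Nw pbar h := by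
      have e1 : (fun x => ∑ y : S × A, dcond x y * (cH⁻¹ * h y))
          = fun x => (cH⁻¹ * (1 - γ)) * f x := by
        funext x
        rw [Dd_smul dcond cH⁻¹ h x, hDh x]
        ring
      rw [e1, Nw_smul pbar (cH⁻¹ * (1 - γ)) f, hNf, mul_one, mul_pow, inv_pow, hc2,
        div_eq_mul_inv]
      ring
    have hle := hmaxle (fun x => cH⁻¹ * h x) hg'
    rw [key] at hle
    have h2 : (1 - γ) ^ 2 ≤ χv * Nw pbar h := (div_le_iff₀ hNh).mp hle
    rw [div_le_iff₀ hχpos]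
    nlinarith
  have hdual2 : υ ≤ (1 - γ) ^ 2 / χv := by
    set cH := Real.sqrt χv with hcH
    have hc0 : 0 < cH := Real.sqrt_pos.mpr hχpos
    have hc2 : cH ^ 2 = χv := Real.sq_sqrt hχpos.le
    set h : S × A → ℝ := fun x => cH⁻¹ * ∑ y : S × A, dcond x y * f₁ y with hh
    have hNh : Nw pbar h = 1 := by
      rw [hh, Nw_smul pbar cH⁻¹ (fun x => ∑ y : S × A, dcond x y * f₁ y), inv_pow, hc2,
        ← hχv]
      field_simp
    have hTh : (fun x => h x - γ * Qop p π h x)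
        = fun x => (cH⁻¹ * (1 - γ)) * f₁ x := by
      funext x
      have hTD := TD p hp0 hp1 π hπ0 hπ1 γ hγ0 hγ1 ptc hptc0 hptcS dcond hdc f₁ x
      have hQ : Qop p π h x
          = cH⁻¹ * Qop p π (fun z => ∑ y : S × A, dcond z y * f₁ y) x := by
        rw [hh]
        exact Qop_mul p π cH⁻¹ (fun z => ∑ y : S × A, dcond z y * f₁ y) x
      have hhx : h x = cH⁻¹ * ∑ y : S × A, dcond x y * f₁ y := rfl
      rw [hhx, hQ]
      linear_combination cH⁻¹ * hTD
    have hle := hminle h hNh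
    rw [hTh, Nw_smul pbar (cH⁻¹ * (1 - γ)) f₁, hf₁K, mul_one, mul_pow, inv_pow, hc2] at hle
    rw [div_eq_mul_inv]
    linarith
  refine ⟨⟨fun _ => ⟨χv, fun u hu => hχub u hu⟩, fun _ => ⟨υ, hυpos, hυlb⟩⟩, fun _ => ?_⟩
  have h1 : sInf ΥS = υ :=
    le_antisymm (csInf_le ⟨υ, hυlb⟩ hυmem) (le_csInf ⟨υ, hυmem⟩ hυlb)
  have h2 : sSup χS = χv :=
    le_antisymm (csSup_le ⟨χv, hχmemv⟩ hχub) (le_csSup ⟨χv, fun u hu => hχub u hu⟩ hχmemv)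
  rw [h1, h2]
  exact le_antisymm hdual2 (by
    have := hdual1 f₀ hf₀K
    exact this)
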